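/- If the distributed greedy algorithm terminates after round t (i.e., O_{t+1} ∪ H_{t+1} = ∅), then L_C ⊆ M_{t+1}: every link chosen by the centralized greedy algorithm is MARKED by the distributed greedy algorithm by the time it terminates. -/

import Mathlib

open Classical

/-- Link distance `d(l_u,l_v)`: minimum graph distance between endpoints of the two links. -/
noncomputable def linkDist {V : Type*} (G : SimpleGraph V) (lu lv : V × V) : ℕ :=
  min (min (G.dist lu.1 lv.1) (G.dist lu.1 lv.2))
      (min (G.dist lu.2 lv.1) (G.dist lu.2 lv.2))

/-- A wireless network: a connected simple graph `G` on the node set `V`, a finite set `L`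
of directed links between adjacent nodes, an interference parameter `K ≥ 1`, and
pairwise distinct link prices `lam`. -/
structure Net (V : Type*) where
  G : SimpleGraph V
  conn : G.Connected
  L : Set (V × V)
  Lfin : L.Finite
  adj : ∀ l ∈ L, G.Adj l.1 l.2
  K : ℕ
  hK : 1 ≤ K
  lam : V × V → ℝ
  distinct : ∀ l ∈ L, ∀ l' ∈ L, l ≠ l' → lam l ≠ lam l'

/-- `W` is a `K`-valid matching: distinct links of `W` are at link distance `≥ K`. -/
def KValid {V : Type*} (N : Net V) (W : Set (V × V)) : Prop :=
  ∀ l ∈ W, ∀ l' ∈ W, l ≠ l' → N.K ≤ linkDist N.G l l'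

/-- State of the distributed algorithm: the OPEN, CHECK, MARKED and CLOSED links. -/
structure St (V : Type*) where
  O : Set (V × V)
  H : Set (V × V)
  M : Set (V × V)
  C : Set (V × V)

/-- The OPEN attached links of node `n` (OPEN links whose source is `n`). -/
def openAt {V : Type*} (s : St V) (n : V) : Set (V × V) :=
  {l ∈ s.O | l.1 = n}

/-- `a` selects, at every node `n` having an OPEN attached link, the highest-priced
OPEN attached link `a n` of `n`. -/
def IsSelector {V : Type*} (N : Net V) (s : St V) (a : V → V × V) : Prop :=
  ∀ n, (openAt s n).Nonempty →
    a n ∈ openAt s n ∧ ∀ l ∈ openAt s n, N.lam l ≤ N.lam (a n)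

/-- `R(n)`: the highest-priced OPEN attached links `a n'` of the other nodes `n'` within
`K+1` hops of `n` that have an OPEN attached link. -/
def Rset {V : Type*} (N : Net V) (s : St V) (a : V → V × V) (n : V) : Set (V × V) :=
  {l' | ∃ n', n' ≠ n ∧ N.G.dist n n' ≤ N.K + 1 ∧ (openAt s n').Nonempty ∧ l' = a n'}

/-- Node `n` marks its highest-priced OPEN attached link `a n`: `n` has an OPEN attached
link, and either `R(n) = ∅` or `a n` beats every received price (this disjunction is
expressed by the universally quantified inequality). -/
def MarkCond {V : Type*} (N : Net V) (s : St V) (a : V → V × V) (n : V) : Prop :=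
  (openAt s n).Nonempty ∧ ∀ l' ∈ Rset N s a n, N.lam l' < N.lam (a n)

/-- One round of the distributed greedy algorithm, transforming state `s` into `s'`.
Phase 1: each node `n` with an OPEN attached link either marks `a n` and closes its other
OPEN attached links (when `MarkCond` holds), or moves to CHECK each OPEN attached link
that is interfered with by a strictly higher-priced received link, the rest staying OPEN.
Phase 2: the marked links are added to the MARKED set; every CHECK link interfering with
some MARKED link is closed; then at each node the highest-priced attached link still in
CHECK (if any) becomes OPEN again. -/
def Step {V : Type*} (N : Net V) (s s' : St V) : Prop :=
  ∃ a : V → V × V, IsSelector N s a ∧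
    (let newMarked : Set (V × V) := {l | ∃ n, MarkCond N s a n ∧ l = a n}
     let closed1 : Set (V × V) := {l ∈ s.O | MarkCond N s a l.1 ∧ l ≠ a l.1}
     let newCheck : Set (V × V) :=
       {l ∈ s.O | ¬ MarkCond N s a l.1 ∧
         ∃ l' ∈ Rset N s a l.1, N.lam l < N.lam l' ∧ linkDist N.G l l' < N.K}
     let M' : Set (V × V) := s.M ∪ newMarked
     let pool : Set (V × V) := s.H ∪ newCheck
     let closed2 : Set (V × V) := {l ∈ pool | ∃ j ∈ M', linkDist N.G l j < N.K}
     let rem : Set (V × V) := pool \ closed2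
     let reopened : Set (V × V) := {l ∈ rem | ∀ l' ∈ rem, l'.1 = l.1 → N.lam l' ≤ N.lam l}
     s'.O = (s.O \ (newMarked ∪ closed1 ∪ newCheck)) ∪ reopened ∧
     s'.H = rem \ reopened ∧
     s'.M = M' ∧
     s'.C = s.C ∪ closed1 ∪ closed2)

/-- A trajectory of the distributed greedy algorithm, rounds indexed from `1`:
initially every link of `L` is OPEN, and each round `m ≥ 1` performs one `Step`. -/
def IsTrajectory {V : Type*} (N : Net V) (O H M C : ℕ → Set (V × V)) : Prop :=
  O 1 = N.L ∧ H 1 = ∅ ∧ M 1 = ∅ ∧ C 1 = ∅ ∧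
    ∀ m, 1 ≤ m → Step N ⟨O m, H m, M m, C m⟩ ⟨O (m+1), H (m+1), M (m+1), C (m+1)⟩

/-- Process a list of links in order, starting from `W`, adding a link whenever the
result is still a `K`-valid matching.  Applied to the listing of `L` in strictly
decreasing order of price, this computes the centralized greedy schedule `L_C`. -/
noncomputable def greedyList {V : Type*} (N : Net V) :
    List (V × V) → Set (V × V) → Set (V × V)
  | [], W => W
  | l :: ls, W => greedyList N ls (if KValid N (insert l W) then insert l W else W)

/-! ### Auxiliary development -/

section Aux

variable {V : Type*}

lemma linkDist_comm (G : SimpleGraph V) (a b : V × V) :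
    linkDist G a b = linkDist G b a := by
  unfold linkDist
  rw [SimpleGraph.dist_comm (u := a.1) (v := b.1), SimpleGraph.dist_comm (u := a.1) (v := b.2), SimpleGraph.dist_comm (u := a.2) (v := b.1), SimpleGraph.dist_comm (u := a.2) (v := b.2)]
  omega

lemma linkDist_le_src (G : SimpleGraph V) (a b : V × V) :
    linkDist G a b ≤ G.dist a.1 b.1 := by
  unfold linkDist; omega

/-- If two (adjacent-endpoint) links interfere, their sources are within `K+1` hops. -/
lemma dist_src_le (N : Net V) {l j : V × V} (hl : N.G.Adj l.1 l.2) (hj : N.G.Adj j.1 j.2)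
    (h : linkDist N.G l j < N.K) : N.G.dist l.1 j.1 ≤ N.K + 1 := by
  have e1 : N.G.dist l.1 l.2 = 1 := SimpleGraph.dist_eq_one_iff_adj.2 hl
  have e2 : N.G.dist j.2 j.1 = 1 := SimpleGraph.dist_eq_one_iff_adj.2 hj.symm
  have t1 : N.G.dist l.1 j.1 ≤ N.G.dist l.1 j.2 + N.G.dist j.2 j.1 := N.conn.dist_triangle
  have t2 : N.G.dist l.1 j.1 ≤ N.G.dist l.1 l.2 + N.G.dist l.2 j.1 := N.conn.dist_triangle
  have t3 : N.G.dist l.2 j.1 ≤ N.G.dist l.2 j.2 + N.G.dist j.2 j.1 := N.conn.dist_triangle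
  unfold linkDist at h
  omega

lemma sel_spec {N : Net V} {s : St V} {a : V → V × V} (hsel : IsSelector N s a) {n : V}
    (hne : (openAt s n).Nonempty) :
    a n ∈ s.O ∧ (a n).1 = n ∧ ∀ l ∈ s.O, l.1 = n → N.lam l ≤ N.lam (a n) := by
  obtain ⟨h1, h2⟩ := hsel n hne
  exact ⟨h1.1, h1.2, fun l hl hl1 => h2 l ⟨hl, hl1⟩⟩

/-- The sets used in one round of the algorithm, as standalone definitions. -/
def nmk (N : Net V) (s : St V) (a : V → V × V) : Set (V × V) :=
  {l | ∃ n, MarkCond N s a n ∧ l = a n}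

def cl1 (N : Net V) (s : St V) (a : V → V × V) : Set (V × V) :=
  {l ∈ s.O | MarkCond N s a l.1 ∧ l ≠ a l.1}

def nck (N : Net V) (s : St V) (a : V → V × V) : Set (V × V) :=
  {l ∈ s.O | ¬ MarkCond N s a l.1 ∧
    ∃ l' ∈ Rset N s a l.1, N.lam l < N.lam l' ∧ linkDist N.G l l' < N.K}

def pool (N : Net V) (s : St V) (a : V → V × V) : Set (V × V) := s.H ∪ nck N s a

def cl2 (N : Net V) (s : St V) (a : V → V × V) : Set (V × V) :=
  {l ∈ pool N s a | ∃ j ∈ s.M ∪ nmk N s a, linkDist N.G l j < N.K}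

def remn (N : Net V) (s : St V) (a : V → V × V) : Set (V × V) := pool N s a \ cl2 N s a

def ro (N : Net V) (s : St V) (a : V → V × V) : Set (V × V) :=
  {l ∈ remn N s a | ∀ l' ∈ remn N s a, l'.1 = l.1 → N.lam l' ≤ N.lam l}

lemma step_iff (N : Net V) (s s' : St V) : Step N s s' ↔ ∃ a : V → V × V,
    IsSelector N s a ∧
    (s'.O = (s.O \ (nmk N s a ∪ cl1 N s a ∪ nck N s a)) ∪ ro N s a ∧
     s'.H = remn N s a \ ro N s a ∧
     s'.M = s.M ∪ nmk N s a ∧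
     s'.C = s.C ∪ cl1 N s a ∪ cl2 N s a) := Iff.rfl

/-- The invariant maintained by the distributed algorithm. -/
structure AInv (N : Net V) (s : St V) : Prop where
  OL : s.O ⊆ N.L
  HL : s.H ⊆ N.L
  ML : s.M ⊆ N.L
  CL : s.C ⊆ N.L
  cover : N.L ⊆ s.O ∪ s.H ∪ s.M ∪ s.C
  dOH : ∀ l, l ∈ s.O → l ∈ s.H → False
  dOM : ∀ l, l ∈ s.O → l ∈ s.M → False
  dOC : ∀ l, l ∈ s.O → l ∈ s.C → False
  dHM : ∀ l, l ∈ s.H → l ∈ s.M → False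
  dHC : ∀ l, l ∈ s.H → l ∈ s.C → False
  dMC : ∀ l, l ∈ s.M → l ∈ s.C → False
  sep : ∀ l ∈ s.O ∪ s.H, ∀ j ∈ s.M, N.K ≤ linkDist N.G l j
  mval : KValid N s.M
  cdom : ∀ l ∈ s.C, ∃ j ∈ s.M, N.lam l < N.lam j ∧ linkDist N.G l j < N.K
  hdom : ∀ l ∈ s.H, ∃ l' ∈ s.O, l'.1 = l.1 ∧ N.lam l < N.lam l'

section Keys

variable {N : Net V} {s : St V} {a : V → V × V}

lemma keyA (hI : AInv N s) (hsel : IsSelector N s a) {n : V} (hm : MarkCond N s a n)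
    {l : V × V} (hl : l ∈ s.O ∪ s.H) (hd : linkDist N.G l (a n) < N.K) (hne : l ≠ a n) :
    N.lam l < N.lam (a n) := by
  obtain ⟨haO, ha1, _⟩ := sel_spec hsel hm.1
  have hll : l ∈ N.L := hl.elim (fun h => hI.OL h) (fun h => hI.HL h)
  obtain ⟨lw, hlwO, hlw1, hlwle⟩ :
      ∃ lw, lw ∈ s.O ∧ lw.1 = l.1 ∧ N.lam l ≤ N.lam lw := by
    rcases hl with h | h
    · exact ⟨l, h, rfl, le_refl _⟩
    · obtain ⟨l', hl'O, hl'1, hl'lt⟩ := hI.hdom l h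
      exact ⟨l', hl'O, hl'1, le_of_lt hl'lt⟩
  have hOl1 : (openAt s l.1).Nonempty := ⟨lw, ⟨hlwO, hlw1⟩⟩
  obtain ⟨hbO, hb1, hbmax⟩ := sel_spec hsel hOl1
  have hlab : N.lam l ≤ N.lam (a l.1) := hlwle.trans (hbmax lw hlwO hlw1)
  by_cases hcase : l.1 = n
  · have h1 : N.lam l ≤ N.lam (a n) := by rw [← hcase]; exact hlab
    exact lt_of_le_of_ne h1 (N.distinct l hll (a n) (hI.OL haO) hne)
  · have hdist : N.G.dist l.1 n ≤ N.K + 1 := by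
      have := dist_src_le N (N.adj l hll) (N.adj (a n) (hI.OL haO)) hd
      rwa [ha1] at this
    have hR : a l.1 ∈ Rset N s a n :=
      ⟨l.1, hcase, by rw [N.G.dist_comm]; exact hdist, hOl1, rfl⟩
    exact lt_of_le_of_lt hlab (hm.2 _ hR)

lemma keyB (hI : AInv N s) (hsel : IsSelector N s a) {n : V} (hm : MarkCond N s a n)
    {l : V × V} (hl : l ∈ s.O) (hd : linkDist N.G l (a n) < N.K) :
    l ∈ nmk N s a ∪ cl1 N s a ∪ nck N s a := by
  obtain ⟨haO, ha1, _⟩ := sel_spec hsel hm.1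
  by_cases h1 : l.1 = n
  · by_cases h2 : l = a n
    · exact Or.inl (Or.inl ⟨n, hm, h2⟩)
    · refine Or.inl (Or.inr ⟨hl, ?_, ?_⟩)
      · rw [h1]; exact hm
      · rw [h1]; exact h2
  · have hne : l ≠ a n := fun h => h1 (by rw [h, ha1])
    have hOl1 : (openAt s l.1).Nonempty := ⟨l, ⟨hl, rfl⟩⟩
    have hdist : N.G.dist l.1 n ≤ N.K + 1 := by
      have := dist_src_le N (N.adj l (hI.OL hl)) (N.adj (a n) (hI.OL haO)) hd
      rwa [ha1] at this
    have r2 : a n ∈ Rset N s a l.1 :=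
      ⟨n, fun h => h1 h.symm, hdist, hm.1, rfl⟩
    have hnm : ¬ MarkCond N s a l.1 := by
      intro hm1
      have r1 : a l.1 ∈ Rset N s a n :=
        ⟨l.1, h1, by rw [N.G.dist_comm]; exact hdist, hOl1, rfl⟩
      exact lt_asymm (hm.2 _ r1) (hm1.2 _ r2)
    exact Or.inr ⟨hl, hnm, a n, r2, keyA hI hsel hm (Or.inl hl) hd hne, hd⟩

lemma nck_subset : nck N s a ⊆ s.O := fun _ h => h.1

lemma pool_subset : pool N s a ⊆ s.O ∪ s.H := fun l h =>
  h.elim (fun h' => Or.inr h') (fun h' => Or.inl (nck_subset h'))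

lemma nmk_subset (hsel : IsSelector N s a) : nmk N s a ⊆ s.O := fun _ h => by
  obtain ⟨n, hm, he⟩ := h
  exact he ▸ (sel_spec hsel hm.1).1

lemma nmk_mark (hsel : IsSelector N s a) {l : V × V} (h : l ∈ nmk N s a) :
    MarkCond N s a l.1 ∧ l = a l.1 := by
  obtain ⟨n, hm, he⟩ := h
  have h1 : (a n).1 = n := (sel_spec hsel hm.1).2.1
  subst he
  rw [h1]
  exact ⟨hm, rfl⟩

lemma keyC (hI : AInv N s) (hsel : IsSelector N s a) {n : V} (hm : MarkCond N s a n)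
    {l : V × V} (hl : l ∈ pool N s a) (hd : linkDist N.G l (a n) < N.K) :
    N.lam l < N.lam (a n) := by
  have haO : a n ∈ s.O := (sel_spec hsel hm.1).1
  have ha1 : (a n).1 = n := (sel_spec hsel hm.1).2.1
  have hne : l ≠ a n := by
    intro h
    rcases hl with h' | h'
    · exact hI.dOH (a n) haO (h ▸ h')
    · exact h'.2.1 (by rw [h, ha1]; exact hm)
  exact keyA hI hsel hm (pool_subset hl) hd hne

lemma keyD (hI : AInv N s) (hsel : IsSelector N s a) {n1 n2 : V}
    (h1 : MarkCond N s a n1) (h2 : MarkCond N s a n2) (hne : a n1 ≠ a n2) :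
    N.K ≤ linkDist N.G (a n1) (a n2) := by
  by_contra hcon
  have hd : linkDist N.G (a n1) (a n2) < N.K := not_le.1 hcon
  obtain ⟨ha1O, ha11, _⟩ := sel_spec hsel h1.1
  obtain ⟨ha2O, ha21, _⟩ := sel_spec hsel h2.1
  have hnn : n1 ≠ n2 := fun h => hne (by rw [h])
  have hdist : N.G.dist n1 n2 ≤ N.K + 1 := by
    have := dist_src_le N (N.adj _ (hI.OL ha1O)) (N.adj _ (hI.OL ha2O)) hd
    rwa [ha11, ha21] at this
  have r1 : a n2 ∈ Rset N s a n1 := ⟨n2, hnn.symm, hdist, h2.1, rfl⟩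
  have r2 : a n1 ∈ Rset N s a n2 := ⟨n1, hnn, by rw [N.G.dist_comm]; exact hdist, h1.1, rfl⟩
  exact lt_asymm (h1.2 _ r1) (h2.2 _ r2)

end Keys

lemma inv_init (N : Net V) : AInv N ⟨N.L, ∅, ∅, ∅⟩ where
  OL := subset_rfl
  HL := Set.empty_subset _
  ML := Set.empty_subset _
  CL := Set.empty_subset _
  cover := fun l hl => Or.inl (Or.inl (Or.inl hl))
  dOH := fun _ _ h => h
  dOM := fun _ _ h => h
  dOC := fun _ _ h => h
  dHM := fun _ h _ => h
  dHC := fun _ h _ => h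
  dMC := fun _ h _ => h
  sep := fun _ _ _ h => absurd h (Set.notMem_empty _)
  mval := fun _ h => absurd h (Set.notMem_empty _)
  cdom := fun _ h => absurd h (Set.notMem_empty _)
  hdom := fun _ h => absurd h (Set.notMem_empty _)

lemma inv_step {N : Net V} {s s' : St V} (hI : AInv N s) (hst : Step N s s') : AInv N s' := by
  rw [step_iff] at hst
  obtain ⟨a, hsel, hO, hH, hM, hC⟩ := hst
  -- basic inclusions
  have hnmO : nmk N s a ⊆ s.O := nmk_subset hsel
  have hc1O : cl1 N s a ⊆ s.O := fun _ h => h.1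
  have hncO : nck N s a ⊆ s.O := nck_subset
  have hpOH : pool N s a ⊆ s.O ∪ s.H := pool_subset
  have hpL : pool N s a ⊆ N.L := fun l h => (hpOH h).elim (fun h' => hI.OL h') (fun h' => hI.HL h')
  have hremp : remn N s a ⊆ pool N s a := fun _ h => h.1
  have hrop : ro N s a ⊆ remn N s a := fun _ h => h.1
  have hc2p : cl2 N s a ⊆ pool N s a := fun _ h => h.1
  -- disjointness facts between the new sets
  have d_nm_nc : ∀ l, l ∈ nmk N s a → l ∈ nck N s a → False := fun l h1 h2 =>
    h2.2.1 (nmk_mark hsel h1).1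
  have d_nm_c1 : ∀ l, l ∈ nmk N s a → l ∈ cl1 N s a → False := fun l h1 h2 =>
    h2.2.2 (nmk_mark hsel h1).2
  have d_c1_nc : ∀ l, l ∈ cl1 N s a → l ∈ nck N s a → False := fun l h1 h2 =>
    h2.2.1 h1.2.1
  have d_nm_p : ∀ l, l ∈ nmk N s a → l ∈ pool N s a → False := fun l h1 h2 =>
    h2.elim (fun h' => hI.dOH l (hnmO h1) h') (fun h' => d_nm_nc l h1 h')
  have d_c1_p : ∀ l, l ∈ cl1 N s a → l ∈ pool N s a → False := fun l h1 h2 =>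
    h2.elim (fun h' => hI.dOH l (hc1O h1) h') (fun h' => d_c1_nc l h1 h')
  have d_p_M : ∀ l, l ∈ pool N s a → l ∈ s.M → False := fun l h1 h2 =>
    (hpOH h1).elim (fun h' => hI.dOM l h' h2) (fun h' => hI.dHM l h' h2)
  have d_p_C : ∀ l, l ∈ pool N s a → l ∈ s.C → False := fun l h1 h2 =>
    (hpOH h1).elim (fun h' => hI.dOC l h' h2) (fun h' => hI.dHC l h' h2)
  have d_rem_c2 : ∀ l, l ∈ remn N s a → l ∈ cl2 N s a → False := fun l h1 h2 => h1.2 h2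
  refine ⟨?_, ?_, ?_, ?_, ?_, ?_, ?_, ?_, ?_, ?_, ?_, ?_, ?_, ?_, ?_⟩
  · -- OL
    rw [hO]; rintro l (⟨h, _⟩ | h)
    · exact hI.OL h
    · exact hpL (hremp (hrop h))
  · -- HL
    rw [hH]; intro l h; exact hpL (hremp h.1)
  · -- ML
    rw [hM]; rintro l (h | h)
    · exact hI.ML h
    · exact hI.OL (hnmO h)
  · -- CL
    rw [hC]; rintro l ((h | h) | h)
    · exact hI.CL h
    · exact hI.OL (hc1O h)
    · exact hpL (hc2p h)
  · -- cover
    have hpdest : ∀ l ∈ pool N s a, l ∈ s'.O ∪ s'.H ∪ s'.M ∪ s'.C := by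
      intro l hp
      by_cases h2 : l ∈ cl2 N s a
      · exact Or.inr (by rw [hC]; exact Or.inr h2)
      · have hrem : l ∈ remn N s a := ⟨hp, h2⟩
        by_cases h3 : l ∈ ro N s a
        · exact Or.inl (Or.inl (Or.inl (by rw [hO]; exact Or.inr h3)))
        · exact Or.inl (Or.inl (Or.inr (by rw [hH]; exact ⟨hrem, h3⟩)))
    intro l hl
    rcases hI.cover hl with (((h | h) | h) | h)
    · by_cases hx : l ∈ nmk N s a ∪ cl1 N s a ∪ nck N s a
      · rcases hx with ((hx | hx) | hx)
        · exact Or.inl (Or.inr (by rw [hM]; exact Or.inr hx))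
        · exact Or.inr (by rw [hC]; exact Or.inl (Or.inr hx))
        · exact hpdest l (Or.inr hx)
      · exact Or.inl (Or.inl (Or.inl (by rw [hO]; exact Or.inl ⟨h, hx⟩)))
    · exact hpdest l (Or.inl h)
    · exact Or.inl (Or.inr (by rw [hM]; exact Or.inl h))
    · exact Or.inr (by rw [hC]; exact Or.inl (Or.inl h))
  · -- dOH
    rw [hO, hH]; rintro l (⟨h1, hx⟩ | h1) h2
    · rcases hpOH (hremp h2.1) with h | h
      · rcases hremp h2.1 with h' | h'
        · exact hI.dOH l h1 h'
        · exact hx (Or.inr h')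
      · exact hI.dOH l h1 h
    · exact h2.2 h1
  · -- dOM
    rw [hO, hM]; rintro l (⟨h1, hx⟩ | h1) (h2 | h2)
    · exact hI.dOM l h1 h2
    · exact hx (Or.inl (Or.inl h2))
    · exact d_p_M l (hremp (hrop h1)) h2
    · exact d_nm_p l h2 (hremp (hrop h1))
  · -- dOC
    rw [hO, hC]; rintro l (⟨h1, hx⟩ | h1) ((h2 | h2) | h2)
    · exact hI.dOC l h1 h2
    · exact hx (Or.inl (Or.inr h2))
    · rcases hc2p h2 with h | h
      · exact hI.dOH l h1 h
      · exact hx (Or.inr h)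
    · exact d_p_C l (hremp (hrop h1)) h2
    · exact d_c1_p l h2 (hremp (hrop h1))
    · exact d_rem_c2 l (hrop h1) h2
  · -- dHM
    rw [hH, hM]; rintro l h1 (h2 | h2)
    · exact d_p_M l (hremp h1.1) h2
    · exact d_nm_p l h2 (hremp h1.1)
  · -- dHC
    rw [hH, hC]; rintro l h1 ((h2 | h2) | h2)
    · exact d_p_C l (hremp h1.1) h2
    · exact d_c1_p l h2 (hremp h1.1)
    · exact d_rem_c2 l h1.1 h2
  · -- dMC
    rw [hM, hC]; rintro l (h1 | h1) ((h2 | h2) | h2)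
    · exact hI.dMC l h1 h2
    · exact hI.dOM l (hc1O h2) h1
    · exact d_p_M l (hc2p h2) h1
    · exact hI.dOC l (hnmO h1) h2
    · exact d_nm_c1 l h1 h2
    · exact d_nm_p l h1 (hc2p h2)
  · -- sep
    rw [hO, hH, hM]
    have hremsep : ∀ l ∈ remn N s a, ∀ j ∈ s.M ∪ nmk N s a, N.K ≤ linkDist N.G l j := by
      intro l hl j hj
      by_contra hcon
      exact d_rem_c2 l hl ⟨hremp hl, j, hj, not_le.1 hcon⟩
    rintro l (((h1 : l ∈ s.O ∧ _) | h1) | h1) j hj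
    · rcases hj with hj | hj
      · exact hI.sep l (Or.inl h1.1) j hj
      · obtain ⟨n, hm, he⟩ := hj
        subst he
        by_contra hcon
        exact h1.2 (keyB hI hsel hm h1.1 (not_le.1 hcon))
    · exact hremsep l (hrop h1) j hj
    · exact hremsep l h1.1 j hj
  · -- mval
    rw [hM]
    rintro x (hx | hx) y (hy | hy) hne
    · exact hI.mval x hx y hy hne
    · obtain ⟨n, hm, he⟩ := hy
      subst he
      rw [linkDist_comm]
      exact hI.sep (a n) (Or.inl (sel_spec hsel hm.1).1) x hx
    · obtain ⟨n, hm, he⟩ := hx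
      subst he
      exact hI.sep (a n) (Or.inl (sel_spec hsel hm.1).1) y hy
    · obtain ⟨n1, hm1, he1⟩ := hx
      obtain ⟨n2, hm2, he2⟩ := hy
      subst he1; subst he2
      exact keyD hI hsel hm1 hm2 hne
  · -- cdom
    rw [hC, hM]
    rintro l ((h | h) | h)
    · obtain ⟨j, hj, h1, h2⟩ := hI.cdom l h
      exact ⟨j, Or.inl hj, h1, h2⟩
    · -- closed1
      obtain ⟨hlO, hmc, hneq⟩ := h
      have hj : a l.1 ∈ nmk N s a := ⟨l.1, hmc, rfl⟩
      have hb1 : (a l.1).1 = l.1 := (sel_spec hsel hmc.1).2.1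
      have hle : N.lam l ≤ N.lam (a l.1) := (sel_spec hsel hmc.1).2.2 l hlO rfl
      have hlt : N.lam l < N.lam (a l.1) :=
        lt_of_le_of_ne hle (N.distinct l (hI.OL hlO) _ (hI.OL (hnmO hj)) hneq)
      refine ⟨a l.1, Or.inr hj, hlt, ?_⟩
      have : linkDist N.G l (a l.1) ≤ N.G.dist l.1 (a l.1).1 := linkDist_le_src _ _ _
      rw [hb1, SimpleGraph.dist_self] at this
      exact lt_of_le_of_lt (Nat.le_zero.1 this).le (lt_of_lt_of_le Nat.zero_lt_one N.hK)
    · -- closed2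
      obtain ⟨hp, j, hj, hdk⟩ := h
      rcases hj with hj | hj
      · exact absurd (hI.sep l (hpOH hp) j hj) (not_le.2 hdk)
      · obtain ⟨n, hm, he⟩ := hj
        subst he
        exact ⟨a n, Or.inr ⟨n, hm, rfl⟩, keyC hI hsel hm hp hdk, hdk⟩
  · -- hdom
    rw [hH, hO]
    rintro l ⟨hrem, hro⟩
    have hex : ∃ l', l' ∈ remn N s a ∧ l'.1 = l.1 ∧ N.lam l < N.lam l' := by
      by_contra hcon
      push_neg at hcon
      exact hro ⟨hrem, fun l' h1 h2 => not_lt.1 fun hlt => absurd hlt (not_lt.2 (hcon l' h1 h2))⟩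
    obtain ⟨l0, hl0r, hl01, hl0lt⟩ := hex
    set S : Set (V × V) := {x ∈ remn N s a | x.1 = l.1} with hS
    have hSfin : S.Finite := N.Lfin.subset (fun x hx => hpL (hremp hx.1))
    have hSne : S.Nonempty := ⟨l0, hl0r, hl01⟩
    obtain ⟨mx, hmxS, hmax⟩ := Set.Finite.exists_maximalFor N.lam S hSfin hSne
    have hmax' : ∀ x ∈ S, N.lam x ≤ N.lam mx := by
      intro x hx
      rcases le_total (N.lam x) (N.lam mx) with h | h
      · exact h
      · exact hmax hx h
    have hmxro : mx ∈ ro N s a := by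
      refine ⟨hmxS.1, fun l' h1 h2 => hmax' l' ⟨h1, ?_⟩⟩
      rw [h2, hmxS.2]
    exact ⟨mx, Or.inr hmxro, hmxS.2, lt_of_lt_of_le hl0lt (hmax' l0 ⟨hl0r, hl01⟩)⟩

lemma inv_all {N : Net V} {O H M C : ℕ → Set (V × V)} (htraj : IsTrajectory N O H M C) :
    ∀ m, 1 ≤ m → AInv N ⟨O m, H m, M m, C m⟩ := by
  intro m hm
  induction m, hm using Nat.le_induction with
  | base =>
    obtain ⟨h1, h2, h3, h4, _⟩ := htraj
    rw [h1, h2, h3, h4]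
    exact inv_init N
  | succ n hn ih => exact inv_step ih (htraj.2.2.2.2 n hn)

lemma kvalid_mono {N : Net V} {W W' : Set (V × V)} (h : W ⊆ W') (h' : KValid N W') :
    KValid N W := fun l hl l' hl' hne => h' l (h hl) l' (h hl') hne

lemma greedy_main (N : Net V) (T Cf : Set (V × V))
    (hTL : T ⊆ N.L) (hcov : ∀ l ∈ N.L, l ∈ T ∨ l ∈ Cf) (hTval : KValid N T)
    (hCf : ∀ l ∈ Cf, ∃ j ∈ T, N.lam l < N.lam j ∧ linkDist N.G l j < N.K) :
    ∀ ls : List (V × V), ls.Pairwise (fun a b => N.lam b < N.lam a) → (∀ l ∈ ls, l ∈ N.L) →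
    ∀ W : Set (V × V), W ⊆ T → (∀ j ∈ T, j ∈ W ∨ j ∈ ls) →
    greedyList N ls W ⊆ T := by
  intro ls
  induction ls with
  | nil =>
    intro _ _ W hWT _
    simpa [greedyList] using hWT
  | cons l ls ih =>
    intro hsort hmem W hWT hTcov
    rw [List.pairwise_cons] at hsort
    obtain ⟨hhead, htail⟩ := hsort
    show greedyList N ls (if KValid N (insert l W) then insert l W else W) ⊆ T
    by_cases hlT : l ∈ T
    · have hval : KValid N (insert l W) :=
        kvalid_mono (Set.insert_subset hlT hWT) hTval
      rw [if_pos hval]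
      refine ih htail (fun x hx => hmem x (List.mem_cons_of_mem _ hx))
        (insert l W) (Set.insert_subset hlT hWT) ?_
      intro j hj
      rcases hTcov j hj with h | h
      · exact Or.inl (Set.mem_insert_of_mem _ h)
      · rcases List.mem_cons.1 h with h | h
        · exact Or.inl (h ▸ Set.mem_insert _ _)
        · exact Or.inr h
    · have hlCf : l ∈ Cf := (hcov l (hmem l List.mem_cons_self)).resolve_left hlT
      obtain ⟨j, hjT, hjlt, hjd⟩ := hCf l hlCf
      have hjW : j ∈ W := by
        rcases hTcov j hjT with h | h
        · exact h
        · rcases List.mem_cons.1 h with h | h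
          · exact absurd (h ▸ hjlt) (lt_irrefl _)
          · exact absurd hjlt (not_lt.2 (le_of_lt (hhead j h)))
      have hval : ¬ KValid N (insert l W) := by
        intro hv
        have hne : l ≠ j := fun h => absurd (h ▸ hjlt) (lt_irrefl _)
        exact absurd (hv l (Set.mem_insert _ _) j (Set.mem_insert_of_mem _ hjW) hne)
          (not_le.2 hjd)
      rw [if_neg hval]
      refine ih htail (fun x hx => hmem x (List.mem_cons_of_mem _ hx)) W hWT ?_
      intro j' hj'
      rcases hTcov j' hj' with h | h
      · exact Or.inl h
      · rcases List.mem_cons.1 h with h | h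
        · exact absurd (h ▸ hj') hlT
        · exact Or.inr h

end Aux


/-- if the distributed greedy algorithm terminates after round `t`, then
every link chosen by the centralized greedy algorithm is MARKED by then:
`L_C ⊆ M (t+1)`. -/
theorem stmt12_centralized_subset_marked {V : Type*} [Fintype V] (N : Net V)
    (O H M C : ℕ → Set (V × V)) (htraj : IsTrajectory N O H M C)
    (lst : List (V × V)) (hmem : ∀ l, l ∈ lst ↔ l ∈ N.L)
    (hsort : lst.Pairwise (fun a b => N.lam b < N.lam a))
    (t : ℕ) (ht : 1 ≤ t) (hterm : O (t + 1) ∪ H (t + 1) = ∅) :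
    greedyList N lst ∅ ⊆ M (t + 1) := by
  have hInv : AInv N ⟨O (t+1), H (t+1), M (t+1), C (t+1)⟩ := inv_all htraj (t+1) (by omega)
  have hOe : O (t+1) = ∅ := by
    have := Set.union_empty_iff.1 hterm
    exact this.1
  have hHe : H (t+1) = ∅ := (Set.union_empty_iff.1 hterm).2
  have hcov : ∀ l ∈ N.L, l ∈ M (t+1) ∨ l ∈ C (t+1) := by
    intro l hl
    rcases hInv.cover hl with (((h | h) | h) | h)
    · rw [show (⟨O (t+1), H (t+1), M (t+1), C (t+1)⟩ : St V).O = O (t+1) from rfl, hOe] at h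
      exact absurd h (Set.notMem_empty _)
    · rw [show (⟨O (t+1), H (t+1), M (t+1), C (t+1)⟩ : St V).H = H (t+1) from rfl, hHe] at h
      exact absurd h (Set.notMem_empty _)
    · exact Or.inl h
    · exact Or.inr h
  refine greedy_main N (M (t+1)) (C (t+1)) hInv.ML hcov hInv.mval hInv.cdom lst hsort
    (fun l hl => (hmem l).1 hl) ∅ (Set.empty_subset _) ?_
  intro j hj
  exact Or.inr ((hmem j).2 (hInv.ML hj))
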